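/- For the sequence c above, for all n ≥ 1 and p ≥ 0: det H_{3n+1}^{3p} = (−1)^n · det H_n^{p+1} · det H_{n+1}^p · det Σ_n^p. -/

import Mathlib

open Matrix
set_option maxHeartbeats 1000000

noncomputable def Hmat (u : ℕ → ℂ) (p n : ℕ) : Matrix (Fin n) (Fin n) ℂ :=
  Matrix.of fun i j => u (p + i + j)

private theorem detJ2 {m : Type*} [DecidableEq m] [Fintype m] {R : Type*} [CommRing R] :
    (fromBlocks (0 : Matrix m m R) (1 : Matrix m m R) 1 0).det = (-1 : R) ^ (Fintype.card m) := by
  have h : fromBlocks (1 : Matrix m m R) (1 : Matrix m m R) (0 : Matrix m m R) (1 : Matrix m m R)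
      * fromBlocks 1 0 (-1) 1 * fromBlocks 1 1 0 1 * fromBlocks (-1) 0 0 1
      = fromBlocks 0 1 1 0 := by
    simp [fromBlocks_multiply]
  have := congrArg Matrix.det h
  rw [det_mul, det_mul, det_mul, det_fromBlocks_zero₂₁, det_fromBlocks_zero₂₁,
    det_fromBlocks_zero₁₂] at this
  simp [det_neg] at this
  simpa using this.symm

private theorem det_antitri {m : Type*} [DecidableEq m] [Fintype m] {R : Type*} [CommRing R]
    (W X Y : Matrix m m R) :
    (fromBlocks W X Y 0).det = (-1 : R) ^ (Fintype.card m) * X.det * Y.det := by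
  have h : fromBlocks X W (0 : Matrix m m R) Y * fromBlocks 0 1 1 0 = fromBlocks W X Y 0 := by
    simp [fromBlocks_multiply]
  have := congrArg Matrix.det h
  rw [det_mul, det_fromBlocks_zero₂₁, detJ2] at this
  rw [← this]; ring

private def tri (n : ℕ) : Fin (n+1) ⊕ (Fin n ⊕ Fin n) → Fin (3*n+1)
  | .inl a => ⟨3*a.val, by have := a.isLt; omega⟩
  | .inr (.inl b) => ⟨3*b.val+1, by have := b.isLt; omega⟩
  | .inr (.inr b) => ⟨3*b.val+2, by have := b.isLt; omega⟩

private theorem tri_bij (n : ℕ) : Function.Bijective (tri n) := by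
  rw [Fintype.bijective_iff_injective_and_card]
  constructor
  · rintro (a|b|b) (a'|b'|b') h <;>
      simp only [tri, Fin.mk.injEq] at h <;>
      first
        | exact absurd h (by omega)
        | exact congrArg Sum.inl (Fin.ext (by omega))
        | exact congrArg (fun x => Sum.inr (Sum.inl x)) (Fin.ext (by omega))
        | exact congrArg (fun x => Sum.inr (Sum.inr x)) (Fin.ext (by omega))
  · simp only [Fintype.card_sum, Fintype.card_fin]; omega

noncomputable def triEquiv (n : ℕ) : (Fin (n+1) ⊕ (Fin n ⊕ Fin n)) ≃ Fin (3*n+1) :=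
  Equiv.ofBijective _ (tri_bij n)

theorem stmt7 (J : ℂ) (hJ : J = (Complex.I * Real.sqrt 3 - 1) / 2)
    (c : ℕ → ℂ) (hc0 : c 0 = 1)
    (hc3 : ∀ n, c (3 * n) = c n)
    (hc31 : ∀ n, c (3 * n + 1) = J * c n)
    (hc32 : ∀ n, c (3 * n + 2) = 0)
    (s : ℕ → ℂ) (hs : ∀ n, s n = c n + c (n + 1)) :
    ∀ n p : ℕ, 1 ≤ n →
      (Hmat c (3 * p) (3 * n + 1)).det =
        (-1) ^ n * (Hmat c (p + 1) n).det * (Hmat c p (n + 1)).det * (Hmat s p n).det := by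
  have h3 : ((Real.sqrt 3 : ℝ) : ℂ)^2 = 3 := by
    norm_cast
    rw [Real.sq_sqrt] <;> norm_num
  have hJJ : J^2 + J + 1 = 0 := by
    rw [hJ]
    linear_combination (Complex.I^2/4) * h3 + ((3:ℂ)/4) * Complex.I_sq
  intro n p hn
  classical
  set A : Matrix (Fin (n+1)) (Fin (n+1)) ℂ := Hmat c p (n+1) with hA
  set B : Matrix (Fin n) (Fin n) ℂ := Hmat c (p+1) n with hB
  set S : Matrix (Fin n) (Fin n) ℂ := Hmat s p n with hS
  set A0 : Matrix (Fin n) (Fin n) ℂ := Hmat c p n with hA0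
  set A1 : Matrix (Fin (n+1)) (Fin n) ℂ := Matrix.of (fun a b => c (p + a + b)) with hA1
  set A2 : Matrix (Fin n) (Fin (n+1)) ℂ := Matrix.of (fun b a => c (p + b + a)) with hA2
  set S1 : Matrix (Fin (n+1)) (Fin n) ℂ := Matrix.of (fun a b => s (p + a + b)) with hS1
  set F : Matrix (Fin (n+1)) (Fin n) ℂ :=
    Matrix.of (fun a b => if a = Fin.succ b then 1 else 0) with hF
  set E : Matrix (Fin n) (Fin (n+1)) ℂ :=
    Matrix.of (fun b a => if a = Fin.castSucc b then 1 else 0) with hE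
  set Gb : Matrix (Fin (n+1) ⊕ (Fin n ⊕ Fin n)) (Fin (n+1) ⊕ (Fin n ⊕ Fin n)) ℂ :=
    fromBlocks A (fromCols (J•A1) 0) (fromRows (J•A2) 0) (fromBlocks 0 B B (J•B)) with hGb
  set U : Matrix (Fin (n+1) ⊕ (Fin n ⊕ Fin n)) (Fin (n+1) ⊕ (Fin n ⊕ Fin n)) ℂ :=
    fromBlocks 1 (fromCols 0 ((J+1)•F)) 0
      (fromBlocks 1 ((-J)•(1 : Matrix (Fin n) (Fin n) ℂ)) 0 1) with hU
  set L : Matrix (Fin (n+1) ⊕ (Fin n ⊕ Fin n)) (Fin (n+1) ⊕ (Fin n ⊕ Fin n)) ℂ :=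
    fromBlocks 1 0 (fromRows ((-J)•E) 0) 1 with hL
  -- step 0 : reindex
  have hre : (Hmat c (3*p) (3*n+1)).det = Gb.det := by
    rw [← Matrix.det_submatrix_equiv_self (triEquiv n) (Hmat c (3*p) (3*n+1))]
    congr 1
    ext (a|b|b) (a'|b'|b') <;>
      simp only [hGb, submatrix_apply, triEquiv, Equiv.ofBijective, Equiv.coe_fn_mk, tri, Hmat,
        of_apply, fromBlocks_apply₁₁, fromBlocks_apply₁₂, fromBlocks_apply₂₁, fromBlocks_apply₂₂,
        fromCols, fromRows_apply_inl, fromRows_apply_inr, Sum.elim_inl, Sum.elim_inr, Matrix.smul_apply, smul_eq_mul, hA, hB, hA1,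
        hA2, Matrix.zero_apply]
    · rw [show 3*p + 3*(a:ℕ) + 3*(a':ℕ) = 3*(p+(a:ℕ)+(a':ℕ)) by ring, hc3]
    · rw [show 3*p + 3*(a:ℕ) + (3*(b':ℕ)+1) = 3*(p+(a:ℕ)+(b':ℕ))+1 by ring, hc31]
    · rw [show 3*p + 3*(a:ℕ) + (3*(b':ℕ)+2) = 3*(p+(a:ℕ)+(b':ℕ))+2 by ring, hc32]
    · rw [show 3*p + (3*(b:ℕ)+1) + 3*(a':ℕ) = 3*(p+(b:ℕ)+(a':ℕ))+1 by ring, hc31]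
    · rw [show 3*p + (3*(b:ℕ)+1) + (3*(b':ℕ)+1) = 3*(p+(b:ℕ)+(b':ℕ))+2 by ring, hc32]
    · rw [show 3*p + (3*(b:ℕ)+1) + (3*(b':ℕ)+2) = 3*(p+(b:ℕ)+(b':ℕ)+1) by ring, hc3]
      rw [show p + (b:ℕ) + (b':ℕ) + 1 = p + 1 + (b:ℕ) + (b':ℕ) by omega]
    · rw [show 3*p + (3*(b:ℕ)+2) + 3*(a':ℕ) = 3*(p+(b:ℕ)+(a':ℕ))+2 by ring, hc32]
    · rw [show 3*p + (3*(b:ℕ)+2) + (3*(b':ℕ)+1) = 3*(p+(b:ℕ)+(b':ℕ)+1) by ring, hc3]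
      rw [show p + (b:ℕ) + (b':ℕ) + 1 = p + 1 + (b:ℕ) + (b':ℕ) by omega]
    · rw [show 3*p + (3*(b:ℕ)+2) + (3*(b':ℕ)+2) = 3*(p+(b:ℕ)+(b':ℕ)+1)+1 by ring, hc31]
      rw [show p + (b:ℕ) + (b':ℕ) + 1 = p + 1 + (b:ℕ) + (b':ℕ) by omega]
  set M2 : Matrix (Fin (n+1) ⊕ (Fin n ⊕ Fin n)) (Fin (n+1) ⊕ (Fin n ⊕ Fin n)) ℂ :=
    fromBlocks A (fromCols (J•A1) ((J+1)•S1)) (fromRows (J•A2) 0)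
      (fromBlocks 0 0 B 0) with hM2
  set M3 : Matrix (Fin (n+1) ⊕ (Fin n ⊕ Fin n)) (Fin (n+1) ⊕ (Fin n ⊕ Fin n)) ℂ :=
    fromBlocks A (fromCols (J•A1) ((J+1)•S1)) 0
      (fromBlocks ((J+1)•A0) S B 0) with hM3
  have hGU : Gb * U = M2 := by
    ext (x|x|x) (y|y|y) <;>
      simp [hGb, hU, hM2, mul_apply, Fintype.sum_sum_type, fromBlocks_apply₁₁,
        fromBlocks_apply₁₂, fromBlocks_apply₂₁, fromBlocks_apply₂₂, fromCols, fromRows_apply_inl, fromRows_apply_inr,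
        Sum.elim_inl, Sum.elim_inr, one_apply, hF, hA, hA1, hA2, hS1, hB, hS, hA0, Hmat,
        mul_ite, ite_mul, Finset.sum_ite_eq, Finset.sum_ite_eq', hs, mul_add, mul_comm] <;>
      first
        | (rw [show p + (x:ℕ) + ((y:ℕ) + 1) = p + (x:ℕ) + (y:ℕ) + 1 from by omega,
            show p + 1 + (x:ℕ) + (y:ℕ) = p + (x:ℕ) + (y:ℕ) + 1 from by omega]
           linear_combination c (p + (x:ℕ) + (y:ℕ) + 1) * hJJ)
        | (rw [show p + (x:ℕ) + ((y:ℕ) + 1) = p + (x:ℕ) + (y:ℕ) + 1 from by omega]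
           linear_combination (-(c (p + (x:ℕ) + (y:ℕ)))) * hJJ)
  have hLM2 : L * M2 = M3 := by
    ext (x|x|x) (y|y|y) <;>
      simp [hL, hM2, hM3, mul_apply, Fintype.sum_sum_type, fromBlocks_apply₁₁,
        fromBlocks_apply₁₂, fromBlocks_apply₂₁, fromBlocks_apply₂₂, fromCols, fromRows_apply_inl, fromRows_apply_inr,
        Sum.elim_inl, Sum.elim_inr, one_apply, hE, hA, hA1, hA2, hS1, hB, hS, hA0, Hmat,
        mul_ite, ite_mul, Finset.sum_ite_eq, Finset.sum_ite_eq', hs, mul_add, mul_comm,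
        Finset.sum_add_distrib, Finset.sum_neg_distrib] <;>
      (try rw [show p + (x:ℕ) + ((y:ℕ) + 1) = p + (x:ℕ) + (y:ℕ) + 1 from by omega]) <;>
      (try rw [show p + 1 + (x:ℕ) + (y:ℕ) = p + (x:ℕ) + (y:ℕ) + 1 from by omega]) <;>
      first
        | (linear_combination c (p + (x:ℕ) + (y:ℕ) + 1) * hJJ)
        | (linear_combination (-(c (p + (x:ℕ) + (y:ℕ)))) * hJJ)
        | (linear_combination (-(c (p + (x:ℕ) + (y:ℕ))) - c (p + (x:ℕ) + (y:ℕ) + 1)) * hJJ)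
  have hdetL : L.det = 1 := by
    rw [hL, det_fromBlocks_zero₁₂]; simp
  have hdetU : U.det = 1 := by
    rw [hU, det_fromBlocks_zero₂₁, det_fromBlocks_zero₂₁]; simp
  have hM3det : M3.det = A.det * ((-1 : ℂ)^n * S.det * B.det) := by
    rw [hM3, det_fromBlocks_zero₂₁, det_antitri]
    simp
  have : Gb.det = M3.det := by
    calc Gb.det = L.det * (Gb.det * U.det) := by rw [hdetL, hdetU]; ring
    _ = (L * (Gb * U)).det := by rw [det_mul, det_mul]
    _ = M3.det := by rw [hGU, hLM2]
  rw [hre, this, hM3det]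
  ring
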